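/- Let C₀ > 0, θ ∈ (0,2], K > 0, and set ε := 1/(1+θ), so that 1−ε = εθ = θ/(θ+1). There exists a constant C' > 0 such that for every t ≥ 0: exp(−⟨t⟩^{1−ε}/((1−ε)C₀)) + ∫_0^t exp(−(⟨t⟩^{1−ε} − ⟨s⟩^{1−ε})/((1−ε)C₀)) · ⟨s⟩^{-ε} · exp(−2K⟨s⟩^{εθ}) ds ≤ C' exp(−(K/C') t^{θ/(θ+1)}). -/

import Mathlib

/-- The Japanese bracket `⟨t⟩ = (1 + t²)^{1/2}` on `ℝ`. -/
noncomputable def jb (t : ℝ) : ℝ := Real.sqrt (1 + t ^ 2)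

lemma jb_one_le (t : ℝ) : 1 ≤ jb t := by
  have h := Real.sqrt_le_sqrt (show (1:ℝ) ≤ 1 + t ^ 2 by nlinarith [sq_nonneg t])
  rwa [Real.sqrt_one] at h

lemma jb_pos (t : ℝ) : 0 < jb t := lt_of_lt_of_le one_pos (jb_one_le t)

lemma le_jb (t : ℝ) (ht : 0 ≤ t) : t ≤ jb t := by
  have h := Real.sqrt_le_sqrt (show t ^ 2 ≤ 1 + t ^ 2 by nlinarith)
  rwa [Real.sqrt_sq ht] at h

lemma jb_mono {s t : ℝ} (hs : 0 ≤ s) (hst : s ≤ t) : jb s ≤ jb t :=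
  Real.sqrt_le_sqrt (by nlinarith)

lemma continuous_jb : Continuous jb :=
  Real.continuous_sqrt.comp (by continuity)

set_option maxHeartbeats 1000000 in
theorem stretched_exponential_decay_convolution_estimate (C₀ : ℝ) (hC₀ : 0 < C₀)
    (θ : ℝ) (hθ : θ ∈ Set.Ioc (0 : ℝ) 2) (K : ℝ) (hK : 0 < K)
    (ε : ℝ) (hε : ε = 1 / (1 + θ)) :
    ∃ C' : ℝ, 0 < C' ∧ ∀ t : ℝ, 0 ≤ t →
      Real.exp (-(jb t) ^ (1 - ε) / ((1 - ε) * C₀)) +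
        (∫ s in Set.Icc (0 : ℝ) t,
          Real.exp (-((jb t) ^ (1 - ε) - (jb s) ^ (1 - ε)) / ((1 - ε) * C₀)) *
            (jb s) ^ (-ε) * Real.exp (-2 * K * (jb s) ^ (ε * θ))) ≤
      C' * Real.exp (-(K / C') * t ^ (θ / (θ + 1))) := by
  obtain ⟨hθ0, hθ2⟩ := hθ
  have hθ1 : (0:ℝ) < θ + 1 := by linarith
  set a : ℝ := θ / (θ + 1) with ha
  have ha0 : 0 < a := div_pos hθ0 hθ1
  have ha1 : a < 1 := (div_lt_one hθ1).mpr (by linarith)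
  have h1ε : 1 - ε = a := by
    rw [hε, ha, eq_div_iff hθ1.ne']
    field_simp
    ring
  have hεθ : ε * θ = a := by
    rw [hε, ha, eq_div_iff hθ1.ne']
    field_simp
    ring
  have hε0 : 0 < ε := by rw [hε]; positivity
  set c : ℝ := 1 / (a * C₀) with hc
  have hc0 : 0 < c := by positivity
  set m : ℝ := min c (2 * K) with hm
  have hm0 : 0 < m := lt_min hc0 (by linarith)
  obtain ⟨n, hn⟩ : ∃ n : ℕ, 1 / a ≤ (n : ℝ) := exists_nat_ge (1 / a)
  have han : 1 ≤ a * n := by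
    rw [div_le_iff₀ ha0] at hn
    nlinarith [hn]
  set B : ℝ := 2 * (Nat.factorial n) * (2 / m) ^ n with hB
  have hB0 : 0 < B := by positivity
  set C' : ℝ := max (2 * K / m) (max 2 B) with hC'
  have hC'0 : 0 < C' := lt_of_lt_of_le two_pos ((le_max_left 2 B).trans (le_max_right _ _))
  refine ⟨C', hC'0, fun t ht => ?_⟩
  rw [h1ε, hεθ]
  have hjbt1 : 1 ≤ jb t := jb_one_le t
  have key : ∀ s ∈ Set.Icc (0:ℝ) t,
      Real.exp (-(jb t ^ a - jb s ^ a) / (a * C₀)) * jb s ^ (-ε) *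
        Real.exp (-2 * K * jb s ^ a) ≤ Real.exp (-(m * jb t ^ a)) := by
    intro s hs
    obtain ⟨hs0, hst⟩ := hs
    have hjbs1 : 1 ≤ jb s := jb_one_le s
    have hjbs_le : jb s ≤ jb t := jb_mono hs0 hst
    have hsa1 : 1 ≤ jb s ^ a := Real.one_le_rpow hjbs1 ha0.le
    have hsa_le : jb s ^ a ≤ jb t ^ a :=
      Real.rpow_le_rpow (by positivity) hjbs_le ha0.le
    have hneg : jb s ^ (-ε) ≤ 1 :=
      Real.rpow_le_one_of_one_le_of_nonpos hjbs1 (by linarith)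
    have hpos : (0:ℝ) < jb s ^ (-ε) := Real.rpow_pos_of_pos (jb_pos s) _
    have hcac : -(jb t ^ a - jb s ^ a) / (a * C₀) = -(jb t ^ a - jb s ^ a) * c := by
      rw [hc]; ring
    calc Real.exp (-(jb t ^ a - jb s ^ a) / (a * C₀)) * jb s ^ (-ε) *
          Real.exp (-2 * K * jb s ^ a)
        ≤ Real.exp (-(jb t ^ a - jb s ^ a) / (a * C₀)) * 1 *
          Real.exp (-2 * K * jb s ^ a) := by
          apply mul_le_mul_of_nonneg_right _ (Real.exp_nonneg _)
          exact mul_le_mul_of_nonneg_left hneg (Real.exp_nonneg _)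
      _ = Real.exp (-(jb t ^ a - jb s ^ a) * c + -2 * K * jb s ^ a) := by
          rw [mul_one, ← Real.exp_add, hcac]
      _ ≤ Real.exp (-(m * jb t ^ a)) := by
          apply Real.exp_le_exp.mpr
          rcases le_total c (2 * K) with h | h
          · have hmc : m = c := min_eq_left h
            rw [hmc]; nlinarith
          · have hmc : m = 2 * K := min_eq_right h
            rw [hmc]
            nlinarith [mul_le_mul_of_nonneg_left hsa_le (by linarith : (0:ℝ) ≤ c - 2 * K)]
  have hint : (∫ s in Set.Icc (0 : ℝ) t,
      Real.exp (-(jb t ^ a - jb s ^ a) / (a * C₀)) * jb s ^ (-ε) *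
        Real.exp (-2 * K * jb s ^ a)) ≤ t * Real.exp (-(m * jb t ^ a)) := by
    have hcont : Continuous (fun s : ℝ =>
        Real.exp (-(jb t ^ a - jb s ^ a) / (a * C₀)) * jb s ^ (-ε) *
          Real.exp (-2 * K * jb s ^ a)) := by
      have h1 : Continuous (fun s : ℝ => jb s ^ a) :=
        continuous_jb.rpow_const (fun s => Or.inl (jb_pos s).ne')
      have h2 : Continuous (fun s : ℝ => jb s ^ (-ε)) :=
        continuous_jb.rpow_const (fun s => Or.inl (jb_pos s).ne')
      fun_prop
    have hInt := hcont.integrableOn_Icc (μ := MeasureTheory.volume) (a := 0) (b := t)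
    calc (∫ s in Set.Icc (0 : ℝ) t,
          Real.exp (-(jb t ^ a - jb s ^ a) / (a * C₀)) * jb s ^ (-ε) *
            Real.exp (-2 * K * jb s ^ a))
        ≤ ∫ _s in Set.Icc (0 : ℝ) t, Real.exp (-(m * jb t ^ a)) := by
          apply MeasureTheory.setIntegral_mono_on hInt
            (MeasureTheory.integrableOn_const (by simp [Real.volume_Icc]))
            measurableSet_Icc key
      _ = t * Real.exp (-(m * jb t ^ a)) := by
          rw [MeasureTheory.setIntegral_const, MeasureTheory.measureReal_def, Real.volume_Icc, smul_eq_mul,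
            ENNReal.toReal_ofReal (by linarith)]
          ring_nf
  have hfirst : Real.exp (-jb t ^ a / (a * C₀)) ≤ Real.exp (-(m * jb t ^ a)) := by
    apply Real.exp_le_exp.mpr
    have h1 : m ≤ c := min_le_left _ _
    have h2 : 0 < jb t ^ a := Real.rpow_pos_of_pos (jb_pos t) _
    have h3 : -jb t ^ a / (a * C₀) = -(c * jb t ^ a) := by rw [hc]; ring
    rw [h3]
    nlinarith
  have hta : t ^ a ≤ jb t ^ a := Real.rpow_le_rpow ht (le_jb t ht) ha0.le
  have hta0 : 0 ≤ t ^ a := Real.rpow_nonneg ht _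
  have step1 : Real.exp (-jb t ^ a / (a * C₀)) +
      (∫ s in Set.Icc (0 : ℝ) t,
        Real.exp (-(jb t ^ a - jb s ^ a) / (a * C₀)) * jb s ^ (-ε) *
          Real.exp (-2 * K * jb s ^ a)) ≤ (1 + t) * Real.exp (-(m * t ^ a)) := by
    have h3 : Real.exp (-(m * jb t ^ a)) ≤ Real.exp (-(m * t ^ a)) := by
      apply Real.exp_le_exp.mpr
      nlinarith
    nlinarith [hint, hfirst, Real.exp_nonneg (-(m * jb t ^ a)), Real.exp_nonneg (-(m * t ^ a))]
  have growth : 1 + t ≤ C' * Real.exp (m / 2 * t ^ a) := by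
    have hexp1 : 1 ≤ Real.exp (m / 2 * t ^ a) := Real.one_le_exp (by positivity)
    rcases le_total t 1 with h | h
    · have h2C : (2:ℝ) ≤ C' := (le_max_left 2 B).trans (le_max_right _ _)
      nlinarith
    · have hBC : B ≤ C' := (le_max_right 2 B).trans (le_max_right _ _)
      have hx0 : (0:ℝ) ≤ m / 2 * t ^ a := by positivity
      have hpow := Real.pow_div_factorial_le_exp _ hx0 n
      have hten : t ≤ t ^ (a * n) := by
        calc t = t ^ (1:ℝ) := (Real.rpow_one t).symm
        _ ≤ t ^ (a * n) := Real.rpow_le_rpow_of_exponent_le h han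
      have heq : (m / 2 * t ^ a) ^ n = (m / 2) ^ n * t ^ (a * n) := by
        rw [mul_pow, ← Real.rpow_natCast (t ^ a) n, ← Real.rpow_mul (by linarith)]
      have h1 : (m / 2) ^ n * t / (Nat.factorial n) ≤ Real.exp (m / 2 * t ^ a) := by
        refine le_trans ?_ hpow
        rw [heq]
        gcongr
      have hfac : (0:ℝ) < (Nat.factorial n : ℝ) := by positivity
      have hmn : (0:ℝ) < (m / 2) ^ n := by positivity
      have h2 : t ≤ (Nat.factorial n : ℝ) * (2 / m) ^ n * Real.exp (m / 2 * t ^ a) := by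
        rw [div_le_iff₀ hfac] at h1
        have hinv : ((2:ℝ) / m) ^ n = ((m / 2) ^ n)⁻¹ := by
          rw [← inv_pow]
          congr 1
          field_simp
        rw [hinv]
        rw [← mul_le_mul_iff_right₀ hmn]
        calc (m / 2) ^ n * t ≤ Real.exp (m / 2 * t ^ a) * (Nat.factorial n) := h1
        _ = (m / 2) ^ n * ((Nat.factorial n : ℝ) * ((m / 2) ^ n)⁻¹ *
              Real.exp (m / 2 * t ^ a)) := by
            field_simp
      calc 1 + t ≤ 2 * t := by linarith
      _ ≤ B * Real.exp (m / 2 * t ^ a) := by rw [hB]; nlinarith [h2]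
      _ ≤ C' * Real.exp (m / 2 * t ^ a) :=
          mul_le_mul_of_nonneg_right hBC (Real.exp_nonneg _)
  have hKC : K / C' ≤ m / 2 := by
    have h1 : 2 * K / m ≤ C' := le_max_left _ _
    have h2 : (0:ℝ) < 2 * K / m := by positivity
    calc K / C' ≤ K / (2 * K / m) := div_le_div_of_nonneg_left hK.le h2 h1
    _ = m / 2 := by field_simp
  calc Real.exp (-jb t ^ a / (a * C₀)) +
      (∫ s in Set.Icc (0 : ℝ) t,
        Real.exp (-(jb t ^ a - jb s ^ a) / (a * C₀)) * jb s ^ (-ε) *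
          Real.exp (-2 * K * jb s ^ a)) ≤ (1 + t) * Real.exp (-(m * t ^ a)) := step1
    _ ≤ (C' * Real.exp (m / 2 * t ^ a)) * Real.exp (-(m * t ^ a)) :=
        mul_le_mul_of_nonneg_right growth (Real.exp_nonneg _)
    _ = C' * Real.exp (-(m / 2) * t ^ a) := by
        rw [mul_assoc, ← Real.exp_add]
        ring_nf
    _ ≤ C' * Real.exp (-(K / C') * t ^ a) := by
        apply mul_le_mul_of_nonneg_left _ hC'0.le
        apply Real.exp_le_exp.mpr
        nlinarith
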